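/- With V_k as in the truncated optimal value iteration for a φ(0)-Lipschitz non-decreasing h and rewards in [R_MIN, R_MAX] with R_MIN ≥ 0, for every augmented state-action (x,s,c,a): V*(x,s,c,a) − φ(0)·c·γ^{k+1}·G_MAX ≤ V_k(x,s,c,a) ≤ V*(x,s,c,a), where V* = max over Markov policies of E[h(s + c·G^π)] and G_MAX = R_MAX/(1−γ). Moreover V_k increases monotonically in k to V*. -/

import Mathlib

open MeasureTheory

noncomputable section

/-- Lemma 3 of the paper: with V_k the optimal truncated risk-adjusted value
(sup over policies of E[h(s + c Σ_{t=0}^k γ^t R_t)]) and V* the optimal value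
(sup over policies of E[h(s + c Σ_{t=0}^∞ γ^t R_t)]), for a non-decreasing,
concave, φ(0)-Lipschitz h and rewards in [R_MIN, R_MAX], R_MIN ≥ 0:
V* − φ(0)·c·γ^{k+1}·G_MAX ≤ V_k ≤ V*, and V_k increases monotonically to V*. -/
theorem stmt7 {Ω Pol : Type*} [MeasurableSpace Ω] (P : Measure Ω) [IsProbabilityMeasure P]
    [Nonempty Pol]
    (R : Pol → ℕ → Ω → ℝ) (hmeas : ∀ π t, Measurable (R π t))
    (Rmin Rmax : ℝ) (hRmin : 0 ≤ Rmin)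
    (hR : ∀ π t ω, R π t ω ∈ Set.Icc Rmin Rmax)
    (γ : ℝ) (hγ : γ ∈ Set.Ico (0:ℝ) 1)
    (φ0 : NNReal) (h : ℝ → ℝ)
    (hconc : ConcaveOn ℝ Set.univ h) (hmono : Monotone h) (hlip : LipschitzWith φ0 h)
    (s c : ℝ) (hc : c ∈ Set.Ioc (0:ℝ) 1)
    (Vk : ℕ → ℝ)
    (hVk : ∀ k, Vk k = ⨆ π : Pol,
      ∫ ω, h (s + c * ∑ t ∈ Finset.range (k + 1), γ ^ t * R π t ω) ∂P)
    (Vstar : ℝ)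
    (hVs : Vstar = ⨆ π : Pol, ∫ ω, h (s + c * ∑' t, γ ^ t * R π t ω) ∂P)
    (Gmax : ℝ) (hG : Gmax = Rmax / (1 - γ)) (k : ℕ) :
    (Vstar - (φ0 : ℝ) * c * γ ^ (k + 1) * Gmax ≤ Vk k ∧ Vk k ≤ Vstar)
    ∧ Monotone Vk
    ∧ Filter.Tendsto Vk Filter.atTop (nhds Vstar) := by
  obtain ⟨hγ0, hγ1⟩ := hγ
  obtain ⟨hc0, hc1⟩ := hc
  have h1γ : (0:ℝ) < 1 - γ := by linarith
  -- nonempty Ω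
  have hΩ : Nonempty Ω := by
    by_contra hn
    have h0 : (Set.univ : Set Ω) = ∅ := Set.univ_eq_empty_iff.mpr (not_nonempty_iff.mp hn)
    have h1 : P Set.univ = 1 := measure_univ
    rw [h0, measure_empty] at h1
    exact zero_ne_one h1
  obtain ⟨ω0⟩ := hΩ
  have hRmax : 0 ≤ Rmax := le_trans hRmin
    (le_trans (hR (Classical.arbitrary Pol) 0 ω0).1 (hR (Classical.arbitrary Pol) 0 ω0).2)
  have hGmax : 0 ≤ Gmax := by rw [hG]; positivity
  -- pointwise facts
  have hnn : ∀ π t (ω : Ω), 0 ≤ γ ^ t * R π t ω := fun π t ω =>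
    mul_nonneg (pow_nonneg hγ0 t) (le_trans hRmin (hR π t ω).1)
  have hle : ∀ π t (ω : Ω), γ ^ t * R π t ω ≤ γ ^ t * Rmax := fun π t ω =>
    mul_le_mul_of_nonneg_left (hR π t ω).2 (pow_nonneg hγ0 t)
  have hgeo : Summable (fun t : ℕ => γ ^ t * Rmax) :=
    (summable_geometric_of_lt_one hγ0 hγ1).mul_right Rmax
  have hsum : ∀ π (ω : Ω), Summable (fun t => γ ^ t * R π t ω) := fun π ω =>
    Summable.of_nonneg_of_le (hnn π · ω) (hle π · ω) hgeo
  have htsum_geo : ∑' t : ℕ, γ ^ t * Rmax = Gmax := by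
    rw [tsum_mul_right, tsum_geometric_of_lt_one hγ0 hγ1, hG, div_eq_inv_mul, mul_comm]
  -- partial sum ≤ tsum
  have hS_le : ∀ π (ω : Ω) (n : ℕ),
      ∑ t ∈ Finset.range n, γ ^ t * R π t ω ≤ ∑' t, γ ^ t * R π t ω := fun π ω n =>
    Summable.sum_le_tsum (Finset.range n) (fun t _ => hnn π t ω) (hsum π ω)
  -- tsum ≤ Gmax
  have htsum_le : ∀ π (ω : Ω), ∑' t, γ ^ t * R π t ω ≤ Gmax := fun π ω =>
    htsum_geo ▸ Summable.tsum_le_tsum (hle π · ω) (hsum π ω) hgeo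
  -- tail bound
  have htail : ∀ π (ω : Ω) (n : ℕ),
      (∑' t, γ ^ t * R π t ω) - ∑ t ∈ Finset.range (n+1), γ ^ t * R π t ω
        ≤ γ ^ (n+1) * Gmax := by
    intro π ω n
    have hsplit := Summable.sum_add_tsum_nat_add (f := fun t => γ ^ t * R π t ω) (n+1) (hsum π ω)
    have htail_sum : Summable (fun t : ℕ => γ ^ (t + (n+1)) * R π (t + (n+1)) ω) :=
      ((hsum π ω).comp_injective (add_left_injective (n+1)))
    have hgeo' : Summable (fun t : ℕ => γ ^ (n+1) * (γ ^ t * Rmax)) := hgeo.mul_left _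
    have : (∑' t : ℕ, γ ^ (t + (n+1)) * R π (t + (n+1)) ω)
        ≤ ∑' t : ℕ, γ ^ (n+1) * (γ ^ t * Rmax) := by
      refine Summable.tsum_le_tsum (fun t => ?_) htail_sum hgeo'
      rw [show γ ^ (n+1) * (γ ^ t * Rmax) = γ ^ (t + (n+1)) * Rmax by rw [pow_add]; ring]
      exact hle π (t + (n+1)) ω
    rw [tsum_mul_left, htsum_geo] at this
    linarith [hsplit, this]
  -- measurability
  have hSmeas : ∀ π n, Measurable (fun ω => ∑ t ∈ Finset.range n, γ ^ t * R π t ω) := by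
    intro π n
    exact Finset.measurable_sum _ (fun t _ => (hmeas π t).const_mul _)
  have hTmeas : ∀ π, Measurable (fun ω => ∑' t, γ ^ t * R π t ω) := by
    intro π
    apply measurable_of_tendsto_metrizable (f := fun n ω =>
      ∑ t ∈ Finset.range n, γ ^ t * R π t ω) (hSmeas π)
    rw [tendsto_pi_nhds]
    intro ω
    exact (hsum π ω).hasSum.tendsto_sum_nat
  -- bound on h values: for x ∈ [0, Gmax], |h (s + c*x)| ≤ C
  set C : ℝ := |h 0| + (φ0 : ℝ) * (|s| + c * Gmax) with hC
  have hbound : ∀ x : ℝ, 0 ≤ x → x ≤ Gmax → |h (s + c * x)| ≤ C := by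
    intro x hx0 hxG
    have := hlip.dist_le_mul (s + c * x) 0
    rw [Real.dist_eq, Real.dist_eq, sub_zero] at this
    have habs : |s + c * x| ≤ |s| + c * Gmax := by
      refine le_trans (abs_add_le _ _) ?_
      have : |c * x| = c * x := abs_of_nonneg (mul_nonneg hc0.le hx0)
      rw [this]
      have := mul_le_mul_of_nonneg_left hxG hc0.le
      linarith
    calc |h (s + c * x)| ≤ |h (s + c * x) - h 0| + |h 0| := by
            have := abs_sub_abs_le_abs_sub (h (s + c * x)) (h 0)
            linarith [abs_abs (h 0)]
      _ ≤ (φ0 : ℝ) * (|s| + c * Gmax) + |h 0| :=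
            add_le_add (le_trans this (mul_le_mul_of_nonneg_left habs φ0.2)) le_rfl
      _ = C := by ring
  -- integrability
  have hintS : ∀ π n, Integrable (fun ω =>
      h (s + c * ∑ t ∈ Finset.range n, γ ^ t * R π t ω)) P := by
    intro π n
    refine ⟨((hlip.continuous.measurable).comp
      ((measurable_const.add ((hSmeas π n).const_mul c)))).aestronglyMeasurable, ?_⟩
    apply HasFiniteIntegral.of_bounded (C := C)
    filter_upwards with ω
    exact hbound _ (Finset.sum_nonneg fun t _ => hnn π t ω)
      (le_trans (hS_le π ω n) (htsum_le π ω))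
  have hintT : ∀ π, Integrable (fun ω => h (s + c * ∑' t, γ ^ t * R π t ω)) P := by
    intro π
    refine ⟨((hlip.continuous.measurable).comp
      ((measurable_const.add ((hTmeas π).const_mul c)))).aestronglyMeasurable, ?_⟩
    apply HasFiniteIntegral.of_bounded (C := C)
    filter_upwards with ω
    exact hbound _ (tsum_nonneg (hnn π · ω)) (htsum_le π ω)
  -- abbreviations
  set A : ℕ → Pol → ℝ := fun n π =>
    ∫ ω, h (s + c * ∑ t ∈ Finset.range (n + 1), γ ^ t * R π t ω) ∂P with hA
  set B : Pol → ℝ := fun π => ∫ ω, h (s + c * ∑' t, γ ^ t * R π t ω) ∂P with hB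
  -- integral comparisons
  have hAB : ∀ n π, A n π ≤ B π := by
    intro n π
    refine integral_mono (hintS π (n+1)) (hintT π) (fun ω => ?_)
    exact hmono (by nlinarith [hS_le π ω (n+1)])
  have hBA : ∀ n π, B π ≤ A n π + (φ0 : ℝ) * c * γ ^ (n + 1) * Gmax := by
    intro n π
    have : (fun ω => h (s + c * ∑' t, γ ^ t * R π t ω)) ≤ᵐ[P]
        fun ω => h (s + c * ∑ t ∈ Finset.range (n+1), γ ^ t * R π t ω)
          + (φ0 : ℝ) * c * γ ^ (n + 1) * Gmax := by
      filter_upwards with ω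
      have hd := hlip.dist_le_mul (s + c * ∑' t, γ ^ t * R π t ω)
        (s + c * ∑ t ∈ Finset.range (n+1), γ ^ t * R π t ω)
      rw [Real.dist_eq, Real.dist_eq] at hd
      have h1 := le_trans (le_abs_self _) hd
      have h2 : |s + c * ∑' t, γ ^ t * R π t ω
          - (s + c * ∑ t ∈ Finset.range (n+1), γ ^ t * R π t ω)|
          = c * ((∑' t, γ ^ t * R π t ω) - ∑ t ∈ Finset.range (n+1), γ ^ t * R π t ω) := by
        rw [abs_of_nonneg] <;> nlinarith [hS_le π ω (n+1)]
      rw [h2] at h1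
      have h3 := htail π ω n
      have h4 : (φ0 : ℝ) * c * ((∑' t, γ ^ t * R π t ω)
          - ∑ t ∈ Finset.range (n+1), γ ^ t * R π t ω)
          ≤ (φ0 : ℝ) * c * (γ ^ (n+1) * Gmax) :=
        mul_le_mul_of_nonneg_left h3 (mul_nonneg φ0.2 hc0.le)
      rw [← mul_assoc] at h1
      rw [← mul_assoc] at h4
      linarith
    calc B π ≤ ∫ ω, (h (s + c * ∑ t ∈ Finset.range (n+1), γ ^ t * R π t ω)
          + (φ0 : ℝ) * c * γ ^ (n + 1) * Gmax) ∂P :=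
        integral_mono_ae (hintT π) ((hintS π (n+1)).add (integrable_const _)) this
      _ = A n π + (φ0 : ℝ) * c * γ ^ (n + 1) * Gmax := by
        rw [integral_add (hintS π (n+1)) (integrable_const _), integral_const, probReal_univ,
          smul_eq_mul, one_mul]
  -- sups are bounded above
  have hIb : ∀ π, B π ≤ C := by
    intro π
    calc B π ≤ ∫ _, C ∂P := integral_mono (hintT π) (integrable_const _) (fun ω =>
          le_trans (le_abs_self _) (hbound _ (tsum_nonneg (hnn π · ω)) (htsum_le π ω)))
      _ = C := by rw [integral_const, probReal_univ, one_smul]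
  have hbddB : BddAbove (Set.range B) := ⟨C, by rintro _ ⟨π, rfl⟩; exact hIb π⟩
  have hbddA : ∀ n, BddAbove (Set.range (A n)) :=
    fun n => ⟨C, by rintro _ ⟨π, rfl⟩; exact le_trans (hAB n π) (hIb π)⟩
  have hVkA : ∀ n, Vk n = ⨆ π, A n π := fun n => hVk n
  have hVsB : Vstar = ⨆ π, B π := hVs
  -- Vk ≤ Vstar
  have hupper : ∀ n, Vk n ≤ Vstar := by
    intro n
    rw [hVkA n, hVsB]
    exact ciSup_mono hbddB (hAB n)
  -- Vstar - δ ≤ Vk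
  have hlower : ∀ n, Vstar - (φ0 : ℝ) * c * γ ^ (n + 1) * Gmax ≤ Vk n := by
    intro n
    rw [hVsB, hVkA n, sub_le_iff_le_add]
    refine ciSup_le (fun π => ?_)
    calc B π ≤ A n π + (φ0 : ℝ) * c * γ ^ (n + 1) * Gmax := hBA n π
      _ ≤ (⨆ π, A n π) + (φ0 : ℝ) * c * γ ^ (n + 1) * Gmax :=
        add_le_add (le_ciSup (hbddA n) π) le_rfl
  -- monotonicity
  have hmonoVk : Monotone Vk := by
    intro m n hmn
    rw [hVkA m, hVkA n]
    refine ciSup_mono (hbddA n) (fun π => ?_)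
    refine integral_mono (hintS π (m+1)) (hintS π (n+1)) (fun ω => ?_)
    refine hmono ?_
    have : ∑ t ∈ Finset.range (m+1), γ ^ t * R π t ω
        ≤ ∑ t ∈ Finset.range (n+1), γ ^ t * R π t ω :=
      Finset.sum_le_sum_of_subset_of_nonneg
        (Finset.range_subset_range.mpr (by omega)) (fun t _ _ => hnn π t ω)
    nlinarith
  -- convergence
  have htend : Filter.Tendsto Vk Filter.atTop (nhds Vstar) := by
    have hγpow : Filter.Tendsto (fun n : ℕ => γ ^ (n+1)) Filter.atTop (nhds 0) := by
      have := tendsto_pow_atTop_nhds_zero_of_lt_one hγ0 hγ1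
      exact this.comp (Filter.tendsto_add_atTop_nat 1)
    have hlow : Filter.Tendsto
        (fun n : ℕ => Vstar - (φ0 : ℝ) * c * γ ^ (n + 1) * Gmax)
        Filter.atTop (nhds Vstar) := by
      have : Filter.Tendsto (fun n : ℕ => (φ0 : ℝ) * c * γ ^ (n + 1) * Gmax)
          Filter.atTop (nhds 0) := by
        have h2 := ((hγpow.const_mul ((φ0 : ℝ) * c)).mul_const Gmax)
        simpa [mul_assoc] using h2
      simpa using (tendsto_const_nhds.sub this)
    exact tendsto_of_tendsto_of_tendsto_of_le_of_le hlow tendsto_const_nhds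
      hlower hupper
  exact ⟨⟨hlower k, hupper k⟩, hmonoVk, htend⟩
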